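/- Define L(ρ) = D_ρ(ρ − ρ̂) − (ζ M'(ρ)/2) ∑_{j=1}^d (D_{m_j} m̂_j / (D_{m_j} M(ρ) + ζ))². If M is twice differentiable with M(ρ) > 0 and M''(ρ) < 0 on an open interval, and D_ρ, D_{m_j}, ζ > 0, then L is strictly increasing on that interval, and hence L has at most one root in the interval. -/

import Mathlib

/-- The reduced first-order optimality function
L(ρ) = D_ρ(ρ − ρ̂) − (ζ M'(ρ)/2) ∑_j (D_{m_j} m̂_j / (D_{m_j} M(ρ) + ζ))². -/
noncomputable def Lred {d : ℕ} (M M' : ℝ → ℝ) (Dρ ζ : ℝ) (Dm : Fin d → ℝ)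
    (ρhat : ℝ) (mhat : Fin d → ℝ) (ρ : ℝ) : ℝ :=
  Dρ * (ρ - ρhat) - ζ * M' ρ / 2 * ∑ j, (Dm j * mhat j / (Dm j * M ρ + ζ)) ^ 2

/-- If M is twice differentiable with M > 0 and M'' < 0 on an open interval, and the constants
are positive, then L is strictly increasing there and hence has at most one root there. -/
theorem Lred_strictMono_and_unique_root {d : ℕ} (M M' M'' : ℝ → ℝ)
    (Dρ ζ : ℝ) (Dm : Fin d → ℝ) (hDρ : 0 < Dρ) (hζ : 0 < ζ) (hDm : ∀ j, 0 < Dm j)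
    (ρhat : ℝ) (mhat : Fin d → ℝ) (a b : ℝ)
    (hM1 : ∀ ρ ∈ Set.Ioo a b, HasDerivAt M (M' ρ) ρ)
    (hM2 : ∀ ρ ∈ Set.Ioo a b, HasDerivAt M' (M'' ρ) ρ)
    (hMpos : ∀ ρ ∈ Set.Ioo a b, 0 < M ρ)
    (hMcc : ∀ ρ ∈ Set.Ioo a b, M'' ρ < 0) :
    StrictMonoOn (Lred M M' Dρ ζ Dm ρhat mhat) (Set.Ioo a b) ∧
      ∀ ρ₁ ∈ Set.Ioo a b, ∀ ρ₂ ∈ Set.Ioo a b,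
        Lred M M' Dρ ζ Dm ρhat mhat ρ₁ = 0 → Lred M M' Dρ ζ Dm ρhat mhat ρ₂ = 0 →
          ρ₁ = ρ₂ := by
  have hg : ∀ (j : Fin d), ∀ ρ ∈ Set.Ioo a b, 0 < Dm j * M ρ + ζ := fun j ρ hρ =>
    add_pos (mul_pos (hDm j) (hMpos ρ hρ)) hζ
  have key : ∀ ρ ∈ Set.Ioo a b, HasDerivAt (Lred M M' Dρ ζ Dm ρhat mhat)
      (Dρ + ∑ j, (ζ * (-(M'' ρ)) / 2 * (Dm j * mhat j / (Dm j * M ρ + ζ)) ^ 2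
        + ζ * (M' ρ) ^ 2 * ((Dm j * mhat j) ^ 2 * Dm j / (Dm j * M ρ + ζ) ^ 3))) ρ := by
    intro ρ hρ
    have hgj : ∀ j, Dm j * M ρ + ζ ≠ 0 := fun j => (hg j ρ hρ).ne'
    have h1 : HasDerivAt (fun ρ => Dρ * (ρ - ρhat)) Dρ ρ := by
      simpa using ((hasDerivAt_id ρ).sub_const ρhat).const_mul Dρ
    have h2 : ∀ j : Fin d, HasDerivAt (fun ρ => (Dm j * mhat j / (Dm j * M ρ + ζ)) ^ 2)
        (2 * (Dm j * mhat j / (Dm j * M ρ + ζ)) *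
          ((0 * (Dm j * M ρ + ζ) - Dm j * mhat j * (Dm j * M' ρ)) / (Dm j * M ρ + ζ) ^ 2)) ρ := by
      intro j
      have hgd : HasDerivAt (fun ρ => Dm j * M ρ + ζ) (Dm j * M' ρ) ρ :=
        ((hM1 ρ hρ).const_mul (Dm j)).add_const ζ
      have := ((hasDerivAt_const ρ (Dm j * mhat j)).fun_div hgd (hgj j)).fun_pow 2
      simpa using this
    have hS : HasDerivAt (fun ρ => ∑ j, (Dm j * mhat j / (Dm j * M ρ + ζ)) ^ 2)
        (∑ j, 2 * (Dm j * mhat j / (Dm j * M ρ + ζ)) *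
          ((0 * (Dm j * M ρ + ζ) - Dm j * mhat j * (Dm j * M' ρ)) / (Dm j * M ρ + ζ) ^ 2)) ρ :=
      HasDerivAt.fun_sum fun j _ => h2 j
    have h3 : HasDerivAt (fun ρ => ζ * M' ρ / 2) (ζ * M'' ρ / 2) ρ :=
      ((hM2 ρ hρ).const_mul ζ).div_const 2
    have htot : HasDerivAt (Lred M M' Dρ ζ Dm ρhat mhat) _ ρ := h1.fun_sub (h3.fun_mul hS)
    convert htot using 1
    rw [mul_comm (ζ * M' ρ / 2), Finset.sum_mul, sub_eq_add_neg]
    congr 1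
    rw [Finset.mul_sum, ← Finset.sum_add_distrib, ← Finset.sum_neg_distrib]
    refine Finset.sum_congr rfl fun j _ => ?_
    field_simp [hgj j]
    ring
  have hpos : ∀ ρ ∈ Set.Ioo a b,
      0 < Dρ + ∑ j, (ζ * (-(M'' ρ)) / 2 * (Dm j * mhat j / (Dm j * M ρ + ζ)) ^ 2
        + ζ * (M' ρ) ^ 2 * ((Dm j * mhat j) ^ 2 * Dm j / (Dm j * M ρ + ζ) ^ 3)) := by
    intro ρ hρ
    have : 0 ≤ ∑ j, (ζ * (-(M'' ρ)) / 2 * (Dm j * mhat j / (Dm j * M ρ + ζ)) ^ 2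
        + ζ * (M' ρ) ^ 2 * ((Dm j * mhat j) ^ 2 * Dm j / (Dm j * M ρ + ζ) ^ 3)) := by
      refine Finset.sum_nonneg fun j _ => add_nonneg ?_ ?_
      · exact mul_nonneg (div_nonneg (mul_nonneg hζ.le (neg_nonneg.2 (hMcc ρ hρ).le))
          (by norm_num)) (sq_nonneg _)
      · exact mul_nonneg (mul_nonneg hζ.le (sq_nonneg _))
          (div_nonneg (mul_nonneg (sq_nonneg _) (hDm j).le) (pow_pos (hg j ρ hρ) 3).le)
    linarith
  have hmono : StrictMonoOn (Lred M M' Dρ ζ Dm ρhat mhat) (Set.Ioo a b) := by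
    refine strictMonoOn_of_deriv_pos (convex_Ioo a b)
      (fun ρ hρ => (key ρ hρ).continuousAt.continuousWithinAt) ?_
    intro ρ hρ
    rw [interior_Ioo] at hρ
    rw [(key ρ hρ).deriv]
    exact hpos ρ hρ
  exact ⟨hmono, fun ρ₁ h₁ ρ₂ h₂ e₁ e₂ => hmono.injOn h₁ h₂ (e₁.trans e₂.symm)⟩
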